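/- Let p be a prime, G a finite group, and N a normal subgroup of G that is a p-group. Let ḡ be an element of G/N whose order is prime to p. Then: (i) there exists x ∈ G of order prime to p (indeed of order equal to the order of ḡ) whose image in G/N is ḡ; and (ii) any two elements of G of order prime to p mapping to ḡ are conjugate by an element of N. In particular each conjugacy class of p'-elements of G/N lifts to a unique conjugacy class of p'-elements of G. -/

import Mathlib

open Subgroup
universe u


/-- A coprime-order element has the same order as its image mod a p-group. -/
private lemma order_eq_order_mk {G : Type*} [Group G] [Finite G] {p : ℕ} (hp : p.Prime)
    (N : Subgroup G) [N.Normal] (hN : IsPGroup p N) (x : G)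
    (hx : Nat.Coprime (orderOf x) p) :
    orderOf (QuotientGroup.mk x : G ⧸ N) = orderOf x := by
  refine Nat.dvd_antisymm (orderOf_map_dvd (QuotientGroup.mk' N) x) ?_
  set k := orderOf (QuotientGroup.mk x : G ⧸ N) with hk
  have hmem : x ^ k ∈ N := by
    rw [← QuotientGroup.eq_one_iff]
    have : ((x : G) : G ⧸ N) ^ k = 1 := pow_orderOf_eq_one _
    simpa using this
  obtain ⟨n, hn⟩ := hN ⟨x ^ k, hmem⟩
  have hn' : (x ^ k) ^ p ^ n = 1 := by
    have := congrArg (Subtype.val) hn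
    simpa using this
  have hdvd : orderOf x ∣ k * p ^ n :=
    orderOf_dvd_of_pow_eq_one (by rw [pow_mul]; exact hn')
  exact (hx.pow_right n).dvd_of_dvd_mul_right hdvd



private lemma center_map_normal {G : Type u} [Group G] (N : Subgroup G) [N.Normal] :
    ((Subgroup.center N).map N.subtype).Normal := by
  constructor
  intro n hn g
  obtain ⟨z, hz, rfl⟩ := hn
  have hgz : g * (z : G) * g⁻¹ ∈ N := Subgroup.Normal.conj_mem ‹N.Normal› _ z.2 g
  refine ⟨⟨g * (z : G) * g⁻¹, hgz⟩, ?_, rfl⟩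
  rw [SetLike.mem_coe, Subgroup.mem_center_iff]
  intro w
  refine Subtype.ext ?_
  show (w : G) * (g * (z : G) * g⁻¹) = (g * (z : G) * g⁻¹) * w
  have hw' : g⁻¹ * (w : G) * g ∈ N := by
    have := Subgroup.Normal.conj_mem ‹N.Normal› _ w.2 g⁻¹
    simpa using this
  have hcomm := Subgroup.mem_center_iff.mp (SetLike.mem_coe.mp hz) ⟨g⁻¹ * (w : G) * g, hw'⟩
  have hcomm' : (g⁻¹ * (w : G) * g) * (z : G) = (z : G) * (g⁻¹ * (w : G) * g) :=
    congrArg Subtype.val hcomm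
  calc (w : G) * (g * (z : G) * g⁻¹)
      = g * ((g⁻¹ * w * g) * (z : G)) * g⁻¹ := by group
    _ = g * ((z : G) * (g⁻¹ * w * g)) * g⁻¹ := by rw [hcomm']
    _ = (g * (z : G) * g⁻¹) * w := by group


private lemma conj_of_abelian {G : Type*} [Group G] [Finite G]
    (N : Subgroup G) [N.Normal]
    (hcomm : ∀ a ∈ N, ∀ b ∈ N, a * b = b * a)
    (m : ℕ) (hm : Nat.Coprime (Nat.card N) m)
    (x y : G) (hxm : x ^ m = 1) (hym : y ^ m = 1)
    (hxy : (QuotientGroup.mk x : G ⧸ N) = QuotientGroup.mk y) :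
    ∃ n ∈ N, n * x * n⁻¹ = y := by
  letI : CommGroup N :=
    { (inferInstance : Group N) with
      mul_comm := fun a b => Subtype.ext (hcomm a a.2 b b.2) }
  have hmem : ∀ i : ℕ, y ^ i * (x ^ i)⁻¹ ∈ N := fun i => by
    rw [← QuotientGroup.eq_one_iff]
    rw [QuotientGroup.mk_mul, QuotientGroup.mk_inv, QuotientGroup.mk_pow,
      QuotientGroup.mk_pow, hxy, mul_inv_cancel]
  set a : ℕ → N := fun i => ⟨y ^ i * (x ^ i)⁻¹, hmem i⟩ with ha
  set σ : N →* N := (MulAut.conjNormal x).toMonoidHom with hσ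
  have hσ_apply : ∀ n : N, ((σ n : N) : G) = x * n * x⁻¹ := fun n => rfl
  have key : ∀ i, σ (a i) = (a 1)⁻¹ * a (i + 1) := by
    intro i
    refine Subtype.ext ?_
    show x * (y ^ i * (x ^ i)⁻¹) * x⁻¹ = (y ^ 1 * (x ^ 1)⁻¹)⁻¹ * (y ^ (i+1) * (x ^ (i+1))⁻¹)
    group
  have a0 : a 0 = 1 := Subtype.ext (by simp [ha])
  have am : a m = 1 := Subtype.ext (by simp [ha, hxm, hym])
  set c : N := ∏ i ∈ Finset.range m, a i with hc
  have hshift : ∏ i ∈ Finset.range m, a (i + 1) = c := by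
    have h1 := Finset.prod_range_succ' a m
    have h2 := Finset.prod_range_succ a m
    rw [h2, am, mul_one, a0, mul_one] at h1
    rw [hc]; exact h1.symm
  have hσc : σ c = ((a 1)⁻¹) ^ m * c := by
    rw [hc, map_prod]
    calc ∏ i ∈ Finset.range m, σ (a i)
        = ∏ i ∈ Finset.range m, ((a 1)⁻¹ * a (i + 1)) := Finset.prod_congr rfl fun i _ => key i
      _ = ((a 1)⁻¹) ^ m * ∏ i ∈ Finset.range m, a (i + 1) := by
          rw [Finset.prod_mul_distrib, Finset.prod_const, Finset.card_range]
      _ = ((a 1)⁻¹) ^ m * c := by rw [hshift]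
  have hinj : Function.Injective (fun g : N => g ^ m) := fun g h hgh =>
    (powCoprime hm).injective (by simpa [powCoprime_apply] using hgh)
  obtain ⟨b, hbm⟩ : ∃ b : N, b ^ m = c :=
    ⟨(powCoprime hm).symm c, by
      have := (powCoprime hm).apply_symm_apply c
      rwa [powCoprime_apply] at this⟩
  have step : (b * (σ b)⁻¹) ^ m = (a 1) ^ m := by
    rw [mul_pow, inv_pow, ← map_pow σ b m, hbm, hσc, mul_inv_rev, ← mul_assoc,
      mul_inv_cancel, one_mul, inv_pow, inv_inv]
  have hkey : b * (σ b)⁻¹ = a 1 := hinj step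
  refine ⟨(b : G), b.2, ?_⟩
  have hkey' : (b : G) * (x * (b : G) * x⁻¹)⁻¹ = y * x⁻¹ := by
    have := congrArg (Subtype.val) hkey
    simp only [Subgroup.coe_mul, InvMemClass.coe_inv, hσ_apply] at this
    rw [this]
    show ((y ^ 1 * (x ^ 1)⁻¹ : G)) = y * x⁻¹
    group
  have h2 : (b : G) * (x * (b : G) * x⁻¹)⁻¹ * x = y := by rw [hkey']; group
  rw [← h2]; group
private lemma conj_of_pgroup (p : ℕ) (hp : p.Prime) :
    ∀ (k : ℕ) (G : Type u) [Group G] [Finite G] (N : Subgroup G) [N.Normal],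
      Nat.card N = k → IsPGroup p N →
      ∀ x y : G, Nat.Coprime (orderOf x) p → Nat.Coprime (orderOf y) p →
      (QuotientGroup.mk x : G ⧸ N) = QuotientGroup.mk y →
      ∃ n ∈ N, n * x * n⁻¹ = y := by
  intro k
  induction k using Nat.strong_induction_on with
  | _ k ih =>
  intro G _ _ N _ hcard hN x y hx hy hxy
  rcases eq_or_ne (Nat.card N) 1 with h1 | h1
  · -- trivial case
    have hbot : N = ⊥ := Subgroup.card_eq_one.mp h1
    have : x⁻¹ * y ∈ N := QuotientGroup.eq.mp hxy
    rw [hbot, Subgroup.mem_bot] at this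
    refine ⟨1, one_mem N, ?_⟩
    have hyx : y = x := by
      have := congrArg (x * ·) this
      simpa [mul_assoc] using this
    simp [hyx]
  · haveI : Fact p.Prime := ⟨hp⟩
    haveI : Nontrivial N := Finite.one_lt_card_iff_nontrivial.mp
      (lt_of_le_of_ne (Nat.one_le_iff_ne_zero.mpr Nat.card_pos.ne') (Ne.symm h1))
    set Z : Subgroup G := (Subgroup.center N).map N.subtype with hZ
    haveI : Z.Normal := center_map_normal N
    have hZle : Z ≤ N := Subgroup.map_subtype_le _
    have hZp : IsPGroup p Z := hN.to_le hZle
    -- pass to the quotient by Z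
    set Gb := G ⧸ Z with hGb
    set π : G →* Gb := QuotientGroup.mk' Z with hπ
    set N' : Subgroup Gb := N.map π with hN'
    haveI : N'.Normal := Subgroup.Normal.map ‹N.Normal› π (QuotientGroup.mk'_surjective Z)
    have hN'p : IsPGroup p N' := hN.map π
    -- the cardinality drops
    have hsurj := π.subgroupMap_surjective N
    have hdvd : Nat.card N' ∣ Nat.card N := Subgroup.card_dvd_of_surjective (π.subgroupMap N) hsurj
    have hne : Nat.card N' ≠ Nat.card N := by
      intro he
      have hbij : Function.Bijective (π.subgroupMap N) :=
        (Nat.bijective_iff_surjective_and_card _).mpr ⟨hsurj, he.symm⟩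
      haveI : Nontrivial (Subgroup.center N) := hN.center_nontrivial
      obtain ⟨z, hz1⟩ := exists_ne (1 : Subgroup.center N)
      have hzZ : ((z : N) : G) ∈ Z := ⟨(z : N), z.2, rfl⟩
      have : π.subgroupMap N (z : N) = 1 := by
        refine Subtype.ext ?_
        show π ((z : N) : G) = 1
        exact (QuotientGroup.eq_one_iff _).mpr hzZ
      have hz1' : (z : N) = 1 := hbij.injective (by rw [this, map_one])
      exact hz1 (Subtype.ext hz1')
    have hlt : Nat.card N' < k := hcard ▸ lt_of_le_of_ne (Nat.le_of_dvd Nat.card_pos hdvd) hne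
    -- apply the induction hypothesis in the quotient
    have hx' : Nat.Coprime (orderOf (π x)) p :=
      Nat.Coprime.coprime_dvd_left (orderOf_map_dvd π x) hx
    have hy' : Nat.Coprime (orderOf (π y)) p :=
      Nat.Coprime.coprime_dvd_left (orderOf_map_dvd π y) hy
    have hxy' : (QuotientGroup.mk (π x) : Gb ⧸ N') = QuotientGroup.mk (π y) := by
      rw [QuotientGroup.eq]
      have : x⁻¹ * y ∈ N := QuotientGroup.eq.mp hxy
      have := Subgroup.mem_map_of_mem π this
      simpa [hN'] using this
    obtain ⟨nb, hnbN', hconj⟩ := ih (Nat.card N') hlt Gb N' rfl hN'p (π x) (π y) hx' hy' hxy'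
    obtain ⟨n, hnN, rfl⟩ := hnbN'
    -- x' := n * x * n⁻¹ maps to y modulo Z
    set x' : G := n * x * n⁻¹ with hx'def
    have hordx' : orderOf x' = orderOf x :=
      orderOf_injective (MulAut.conj n).toMonoidHom (MulAut.conj n).injective x
    have hx'p : Nat.Coprime (orderOf x') p := hordx' ▸ hx
    have hmk : (QuotientGroup.mk x' : G ⧸ Z) = QuotientGroup.mk y := by
      have : π x' = π y := by
        rw [hx'def]
        simpa [map_mul, map_inv] using hconj
      exact this
    -- orders agree
    have e1 : orderOf (QuotientGroup.mk x' : G ⧸ Z) = orderOf x' :=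
      order_eq_order_mk hp Z hZp x' hx'p
    have e2 : orderOf (QuotientGroup.mk y : G ⧸ Z) = orderOf y :=
      order_eq_order_mk hp Z hZp y hy
    have hord : orderOf x' = orderOf y := by rw [← e1, ← e2, hmk]
    -- Z is an abelian p-group; apply the abelian case
    have hcommZ : ∀ a ∈ Z, ∀ b ∈ Z, a * b = b * a := by
      rintro a ⟨za, hza, rfl⟩ b ⟨zb, hzb, rfl⟩
      have := Subgroup.mem_center_iff.mp (SetLike.mem_coe.mp hza) zb
      exact congrArg Subtype.val this.symm
    obtain ⟨j, hj⟩ := IsPGroup.iff_card.mp hZp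
    have hmZ : Nat.Coprime (Nat.card Z) (orderOf y) := by
      rw [hj]
      exact Nat.Coprime.pow_left j (Nat.Coprime.symm hy)
    have hx'm : x' ^ orderOf y = 1 := by rw [← hord]; exact pow_orderOf_eq_one x'
    obtain ⟨z, hzZ, hzconj⟩ :=
      conj_of_abelian Z hcommZ (orderOf y) hmZ x' y hx'm (pow_orderOf_eq_one y) hmk
    refine ⟨z * n, mul_mem (hZle hzZ) hnN, ?_⟩
    rw [← hzconj, hx'def]
    group
/-- Let `p` be a prime, `G` a finite group and `N ◁ G` a normal `p`-subgroup.
Let `g ∈ G/N` have order prime to `p`.  Then (i) there is `x ∈ G` of order equal to the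
order of `g` (in particular prime to `p`) mapping onto `g`, and (ii) any two elements of
`G` of order prime to `p` mapping to `g` are conjugate by an element of `N`. -/
theorem lift_p_prime_elements_of_quotient_by_p_group
    (p : ℕ) (hp : p.Prime) (G : Type*) [Group G] [Finite G]
    (N : Subgroup G) [N.Normal] (hN : IsPGroup p N)
    (g : G ⧸ N) (hg : Nat.Coprime (orderOf g) p) :
    (∃ x : G, orderOf x = orderOf g ∧ (QuotientGroup.mk x : G ⧸ N) = g) ∧
    (∀ x y : G, Nat.Coprime (orderOf x) p → Nat.Coprime (orderOf y) p →
      (QuotientGroup.mk x : G ⧸ N) = g → (QuotientGroup.mk y : G ⧸ N) = g →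
      ∃ n ∈ N, n * x * n⁻¹ = y) := by
  constructor
  · -- part (i): existence of a coprime-order lift
    obtain ⟨y, hy⟩ := QuotientGroup.mk_surjective g
    set k := orderOf y with hk
    have hk0 : k ≠ 0 := (orderOf_pos y).ne'
    set q := p ^ k.factorization p with hq
    set b := ordCompl[p] k with hb
    have hqb : q * b = k := Nat.ordProj_mul_ordCompl_eq_self k p
    have hpb : ¬ p ∣ b := Nat.not_dvd_ordCompl hp hk0
    have hco : Nat.Coprime q b := (Nat.coprime_ordCompl hp hk0).pow_left _
    have hmk : orderOf g ∣ k := by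
      rw [← hy, hk]
      exact orderOf_map_dvd (QuotientGroup.mk' N) y
    have hmb : orderOf g ∣ b := by
      refine (hg.pow_right (k.factorization p)).dvd_of_dvd_mul_right ?_
      rw [mul_comm] at hqb
      rw [hqb]
      exact hmk
    have hgb : g ^ b = 1 := orderOf_dvd_iff_pow_eq_one.mp hmb
    have hbpos : 1 ≤ b := Nat.one_le_iff_ne_zero.mpr
      (fun h0 => hk0 (by rw [← hqb, h0, mul_zero]))
    rcases eq_or_lt_of_le hbpos with hb1 | hb1
    · -- b = 1, so g = 1
      have hg1 : g = 1 := by rw [← hgb, ← hb1, pow_one]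
      exact ⟨1, by simp [hg1], by simp [hg1]⟩
    · obtain ⟨t, -, ht⟩ := Nat.exists_mul_mod_eq_one_of_coprime hco hb1
      set x := y ^ (q * t) with hx
      have hxb : x ^ b = 1 := by
        rw [hx, ← pow_mul]
        refine orderOf_dvd_iff_pow_eq_one.mp ?_
        rw [← hk, ← hqb]
        exact ⟨t, by ring⟩
      have hxcop : Nat.Coprime (orderOf x) p :=
        Nat.Coprime.coprime_dvd_left (orderOf_dvd_of_pow_eq_one hxb)
          ((hp.coprime_iff_not_dvd.mpr hpb).symm)
      have hmkx : (QuotientGroup.mk x : G ⧸ N) = g := by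
        have h1 : (QuotientGroup.mk x : G ⧸ N) = g ^ (q * t) := by
          rw [hx, ← hy, QuotientGroup.mk_pow]
        have hdm : q * t = b * (q * t / b) + 1 := by
          conv_lhs => rw [← Nat.div_add_mod (q * t) b]
          rw [ht, mul_comm]
        rw [h1, hdm, pow_add, pow_one, pow_mul, hgb, one_pow, one_mul]
      refine ⟨x, ?_, hmkx⟩
      rw [← hmkx]
      exact (order_eq_order_mk hp N hN x hxcop).symm
  · intro x y hx hy h1 h2
    exact conj_of_pgroup p hp (Nat.card N) G N rfl hN x y hx hy (h1.trans h2.symm)
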